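/- Let c and c' be sets of ordinals and C a set of ordinals, and suppose that for every ordinal ξ that is a common limit point of c and c' (i.e., ξ = sup(c ∩ ξ) = sup(c' ∩ ξ) > 0), one has c ∩ ξ = c' ∩ ξ. Define d = lim(c) ∩ C and d' = lim(c') ∩ C. Then for every ξ ∈ d ∩ d', d ∩ ξ = d' ∩ ξ. -/
import Mathlib


open Ordinal Set

/-- The set of nonzero limit points of a set of ordinals. -/
def limPts (c : Set Ordinal) : Set Ordinal :=
  {ξ | sSup (c ∩ Set.Iio ξ) = ξ ∧ 0 < ξ}

/-- If `c` and `c'` agree below every common limit point, then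
    `d = lim(c) ∩ C` and `d' = lim(c') ∩ C` agree below every member of `d ∩ d'`. -/
theorem lim_inter_coherent (c c' C : Set Ordinal)
    (h : ∀ ξ : Ordinal, 0 < ξ → sSup (c ∩ Set.Iio ξ) = ξ → sSup (c' ∩ Set.Iio ξ) = ξ →
      c ∩ Set.Iio ξ = c' ∩ Set.Iio ξ) :
    ∀ ξ ∈ (limPts c ∩ C) ∩ (limPts c' ∩ C),
      (limPts c ∩ C) ∩ Set.Iio ξ = (limPts c' ∩ C) ∩ Set.Iio ξ := by
  rintro ξ ⟨⟨⟨hcs, hpos⟩, hC⟩, ⟨hcs', -⟩, -⟩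
  have key : c ∩ Set.Iio ξ = c' ∩ Set.Iio ξ := h ξ hpos hcs hcs'
  have below : ∀ η < ξ, c ∩ Set.Iio η = c' ∩ Set.Iio η := by
    intro η hη
    have hIio : Set.Iio ξ ∩ Set.Iio η = Set.Iio η := by
      ext x; simp only [Set.mem_inter_iff, Set.mem_Iio, and_iff_right_iff_imp]
      exact fun hx => hx.trans hη
    calc c ∩ Set.Iio η = c ∩ Set.Iio ξ ∩ Set.Iio η := by rw [Set.inter_assoc, hIio]
      _ = c' ∩ Set.Iio ξ ∩ Set.Iio η := by rw [key]
      _ = c' ∩ Set.Iio η := by rw [Set.inter_assoc, hIio]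
  ext η
  simp only [Set.mem_inter_iff, Set.mem_Iio, limPts, Set.mem_setOf_eq]
  constructor
  · rintro ⟨⟨⟨hs, hp⟩, hηC⟩, hηξ⟩
    exact ⟨⟨⟨by rw [← below η hηξ, hs], hp⟩, hηC⟩, hηξ⟩
  · rintro ⟨⟨⟨hs, hp⟩, hηC⟩, hηξ⟩
    exact ⟨⟨⟨by rw [below η hηξ, hs], hp⟩, hηC⟩, hηξ⟩
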